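/- Let G = (V,E) be a finite connected d-regular graph on n vertices with adjacency-matrix eigenvalues d = λ₁ ≥ λ₂ ≥ … ≥ λ_n. Then the isoperimetric (expanding) constant h(G) = min over nonempty F ⊊ V of |∂F|/min(|F|, |V∖F|) satisfies h(G) ≥ (d − λ₂)/2. -/

import Mathlib

open Finset Matrix

section Aux

variable {n : ℕ} (G : SimpleGraph (Fin n)) [DecidableRel G.Adj]

lemma pair_sum_eq (f : Fin n → Fin n → ℝ) :
    ∑ p ∈ univ.filter (fun p : Fin n × Fin n => G.Adj p.1 p.2), f p.1 p.2
      = ∑ u, ∑ v ∈ G.neighborFinset u, f u v := by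
  rw [Finset.sum_filter, Fintype.sum_prod_type]
  refine Finset.sum_congr rfl fun u _ => ?_
  rw [SimpleGraph.neighborFinset_eq_filter, Finset.sum_filter]

lemma pair_sum_symm (f : Fin n → Fin n → ℝ) :
    ∑ p ∈ univ.filter (fun p : Fin n × Fin n => G.Adj p.1 p.2), f p.1 p.2
      = ∑ p ∈ univ.filter (fun p : Fin n × Fin n => G.Adj p.1 p.2), f p.2 p.1 := by
  refine Finset.sum_equiv (Equiv.prodComm (Fin n) (Fin n)) ?_ ?_
  · intro p; simp [G.adj_comm]
  · intro p _; rfl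

lemma quad_identity {d : ℕ} (hreg : G.IsRegularOfDegree d) (x : Fin n → ℝ) :
    ∑ p ∈ univ.filter (fun p : Fin n × Fin n => G.Adj p.1 p.2), (x p.1 - x p.2)^2
      = 2 * ((d : ℝ) * ∑ u, (x u)^2) - 2 * (x ⬝ᵥ (G.adjMatrix ℝ *ᵥ x)) := by
  have h1 : ∑ p ∈ univ.filter (fun p : Fin n × Fin n => G.Adj p.1 p.2), (x p.1)^2
      = (d : ℝ) * ∑ u, (x u)^2 := by
    rw [pair_sum_eq G (fun u v => (x u)^2), Finset.mul_sum]
    refine Finset.sum_congr rfl fun u _ => ?_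
    rw [Finset.sum_const, SimpleGraph.card_neighborFinset_eq_degree, hreg u, nsmul_eq_mul]
  have h2 : ∑ p ∈ univ.filter (fun p : Fin n × Fin n => G.Adj p.1 p.2), (x p.2)^2
      = (d : ℝ) * ∑ u, (x u)^2 := by
    rw [← pair_sum_symm G (fun u v => (x u)^2)]; exact h1
  have h3 : ∑ p ∈ univ.filter (fun p : Fin n × Fin n => G.Adj p.1 p.2), x p.1 * x p.2
      = x ⬝ᵥ (G.adjMatrix ℝ *ᵥ x) := by
    rw [pair_sum_eq G (fun u v => x u * x v)]
    rw [dotProduct]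
    refine Finset.sum_congr rfl fun u _ => ?_
    rw [SimpleGraph.adjMatrix_mulVec_apply, Finset.mul_sum]
  calc ∑ p ∈ univ.filter (fun p : Fin n × Fin n => G.Adj p.1 p.2), (x p.1 - x p.2)^2
      = ∑ p ∈ univ.filter (fun p : Fin n × Fin n => G.Adj p.1 p.2),
          ((x p.1)^2 + (x p.2)^2 - 2 * (x p.1 * x p.2)) := by
        refine Finset.sum_congr rfl fun p _ => by ring
    _ = _ := by
        rw [Finset.sum_sub_distrib, Finset.sum_add_distrib, h1, h2, ← Finset.mul_sum, h3]
        ring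

omit [DecidableRel G.Adj] in
lemma const_of_adj_eq (hconn : G.Connected) (f : Fin n → ℝ)
    (h : ∀ u v, G.Adj u v → f u = f v) : ∀ u v, f u = f v := by
  intro u v
  obtain ⟨w⟩ := hconn.preconnected u v
  induction w with
  | nil => rfl
  | cons hadj _ ih => exact (h _ _ hadj).trans ih

lemma eigen_const {d : ℕ} (hconn : G.Connected) (hreg : G.IsRegularOfDegree d)
    (v : Fin n → ℝ) (hv : G.adjMatrix ℝ *ᵥ v = (d : ℝ) • v) : ∀ u w, v u = v w := by
  have hdot : v ⬝ᵥ (G.adjMatrix ℝ *ᵥ v) = (d : ℝ) * ∑ u, (v u)^2 := by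
    rw [hv, dotProduct_smul, smul_eq_mul, dotProduct]
    congr 1; exact Finset.sum_congr rfl fun u _ => (sq (v u)).symm ▸ by ring
  have hzero : ∑ p ∈ univ.filter (fun p : Fin n × Fin n => G.Adj p.1 p.2), (v p.1 - v p.2)^2
      = 0 := by
    rw [quad_identity G hreg v, hdot]; ring
  have hadj : ∀ u w, G.Adj u w → v u = v w := by
    intro u w huw
    have := (Finset.sum_eq_zero_iff_of_nonneg (fun p _ => sq_nonneg _)).mp hzero (u, w)
      (by simp [huw])
    have h2 : v u - v w = 0 := sq_eq_zero_iff.mp this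
    linarith
  exact const_of_adj_eq G hconn v hadj

end Aux

lemma rayleigh {n : ℕ} {A : Matrix (Fin n) (Fin n) ℝ} (hA : A.IsHermitian) (i₀ : Fin n)
    (lam2 : ℝ) (hlam : ∀ i, i ≠ i₀ → hA.eigenvalues i ≤ lam2)
    (x : Fin n → ℝ) (hx : ⇑(hA.eigenvectorBasis i₀) ⬝ᵥ x = 0) :
    x ⬝ᵥ (A *ᵥ x) ≤ lam2 * (x ⬝ᵥ x) := by
  set U : Matrix (Fin n) (Fin n) ℝ := (hA.eigenvectorUnitary : Matrix (Fin n) (Fin n) ℝ) with hUdef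
  have hstar : star U = Uᵀ := by
    ext i j; simp [conjTranspose_apply]
  have hUU : U * Uᵀ = 1 := by
    rw [← hstar]; exact (Matrix.mem_unitaryGroup_iff).mp hA.eigenvectorUnitary.2
  set y : Fin n → ℝ := Uᵀ *ᵥ x with hydef
  have hxy : x ᵥ* U = y := by
    rw [hydef, ← Matrix.vecMul_transpose, Matrix.transpose_transpose]
  have hAx : x ⬝ᵥ (A *ᵥ x) = ∑ i, hA.eigenvalues i * (y i)^2 := by
    conv_lhs => rw [hA.spectral_theorem, Unitary.conjStarAlgAut_apply]
    rw [hstar, ← Matrix.mulVec_mulVec, ← Matrix.mulVec_mulVec, Matrix.dotProduct_mulVec, hxy]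
    have hdiag : (diagonal (RCLike.ofReal ∘ hA.eigenvalues)) *ᵥ y
        = fun i => hA.eigenvalues i * y i := by
      ext i; simp [Matrix.mulVec_diagonal]
    rw [hdiag, dotProduct]
    exact Finset.sum_congr rfl fun i _ => by ring
  have hxx : x ⬝ᵥ x = ∑ i, (y i)^2 := by
    have : y ⬝ᵥ y = x ⬝ᵥ x :=
      calc y ⬝ᵥ y = (x ᵥ* U) ⬝ᵥ (Uᵀ *ᵥ x) := by rw [hxy]
        _ = x ⬝ᵥ (U *ᵥ (Uᵀ *ᵥ x)) := (Matrix.dotProduct_mulVec _ _ _).symm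
        _ = x ⬝ᵥ x := by rw [Matrix.mulVec_mulVec, hUU, Matrix.one_mulVec]
    rw [← this, dotProduct]
    exact Finset.sum_congr rfl fun i _ => (sq (y i)).symm
  have hy0 : y i₀ = 0 := by
    rw [hydef]
    show ∑ j, Uᵀ i₀ j * x j = 0
    rw [← hx, dotProduct]
    exact Finset.sum_congr rfl fun j _ => by rw [Matrix.transpose_apply]; congr 1
  rw [hAx, hxx, Finset.mul_sum]
  refine Finset.sum_le_sum fun i _ => ?_
  rcases eq_or_ne i i₀ with rfl | hne
  · simp [hy0]
  · exact mul_le_mul_of_nonneg_right (hlam i hne) (sq_nonneg _)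

set_option maxHeartbeats 2000000 in
/-- Alon–Milman/Cheeger bound: for a finite connected d-regular graph with second largest
adjacency eigenvalue λ₂, the isoperimetric constant satisfies h(G) ≥ (d − λ₂)/2. -/
theorem cheeger_lower_bound (n d : ℕ) (hn : 2 ≤ n) (G : SimpleGraph (Fin n))
    [DecidableRel G.Adj] (hconn : G.Connected) (hreg : G.IsRegularOfDegree d)
    (hA : (G.adjMatrix ℝ).IsHermitian)
    (i₀ : Fin n) (hi₀ : hA.eigenvalues i₀ = d)
    (lam2 : ℝ) (hlam2 : lam2 = sSup {x : ℝ | ∃ i, i ≠ i₀ ∧ hA.eigenvalues i = x}) :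
    ∀ F : Finset (Fin n), F.Nonempty → F ≠ Finset.univ →
      ((d : ℝ) - lam2) / 2 ≤
        ((Finset.univ.filter
            (fun p : Fin n × Fin n => G.Adj p.1 p.2 ∧ p.1 ∈ F ∧ p.2 ∉ F)).card : ℝ) /
          min (F.card : ℝ) ((Finset.univ \ F).card : ℝ) := by
  intro F hFne hFuniv
  -- basic cardinalities
  set a : ℝ := (F.card : ℝ) with hadef
  set b : ℝ := ((univ \ F).card : ℝ) with hbdef
  have hle : F.card ≤ n := by
    simpa using Finset.card_le_univ F
  have hcards : F.card + (univ \ F).card = n := by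
    rw [Finset.card_sdiff_of_subset (Finset.subset_univ F), Finset.card_univ, Fintype.card_fin]
    omega
  have ha1 : 1 ≤ F.card := hFne.card_pos
  have hb1 : 1 ≤ (univ \ F).card := by
    have hne : (univ \ F).Nonempty := by
      rw [Finset.sdiff_nonempty]
      intro h
      exact hFuniv (Finset.univ_subset_iff.mp h)
    exact hne.card_pos
  have ha : (1:ℝ) ≤ a := by rw [hadef]; exact_mod_cast ha1
  have hb : (1:ℝ) ≤ b := by rw [hbdef]; exact_mod_cast hb1
  have hab : a + b = (n:ℝ) := by
    rw [hadef, hbdef, ← Nat.cast_add, hcards]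
  -- the test vector
  set x : Fin n → ℝ := fun u => if u ∈ F then b else -a with hxdef
  have hFfilter : univ.filter (· ∈ F) = F := by ext u; simp
  have hFfilter' : univ.filter (fun u => ¬ u ∈ F) = univ \ F := by ext u; simp
  have hsplit : ∀ g : Fin n → ℝ,
      ∑ u, g u = ∑ u ∈ F, g u + ∑ u ∈ univ \ F, g u := by
    intro g
    rw [← Finset.sum_sdiff (Finset.subset_univ F), add_comm]
  have hsumx : ∑ u, x u = 0 := by
    have hsF : (∑ u ∈ F, x u) = ∑ _u ∈ F, b :=
      Finset.sum_congr rfl fun u hu => by simp [hxdef, hu]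
    have hsC : (∑ u ∈ univ \ F, x u) = ∑ _u ∈ univ \ F, (-a) :=
      Finset.sum_congr rfl fun u hu => by simp [hxdef, (Finset.mem_sdiff.mp hu).2]
    rw [hsplit, hsF, hsC, Finset.sum_const, Finset.sum_const, nsmul_eq_mul, nsmul_eq_mul,
      ← hadef, ← hbdef]
    ring
  have hS2 : ∑ u, (x u)^2 = a * b * (a + b) := by
    have hsF : (∑ u ∈ F, (x u)^2) = ∑ _u ∈ F, b^2 :=
      Finset.sum_congr rfl fun u hu => by simp [hxdef, hu]
    have hsC : (∑ u ∈ univ \ F, (x u)^2) = ∑ _u ∈ univ \ F, a^2 :=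
      Finset.sum_congr rfl fun u hu => by simp [hxdef, (Finset.mem_sdiff.mp hu).2]
    rw [hsplit, hsF, hsC, Finset.sum_const, Finset.sum_const, nsmul_eq_mul, nsmul_eq_mul,
      ← hadef, ← hbdef]
    ring
  -- eigenvalue bounds
  have hlam : ∀ i, i ≠ i₀ → hA.eigenvalues i ≤ lam2 := by
    intro i hi
    rw [hlam2]
    have hfin : {x : ℝ | ∃ i, i ≠ i₀ ∧ hA.eigenvalues i = x}.Finite := by
      have himg : {x : ℝ | ∃ i, i ≠ i₀ ∧ hA.eigenvalues i = x}
          = hA.eigenvalues '' {i | i ≠ i₀} := by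
        ext t; simp [Set.mem_image]
      rw [himg]
      exact (Set.toFinite _).image _
    exact le_csSup hfin.bddAbove ⟨i, hi, rfl⟩
  -- the eigenvector for i₀ is constant
  have hconst : ∀ u w, (⇑(hA.eigenvectorBasis i₀) : Fin n → ℝ) u
      = (⇑(hA.eigenvectorBasis i₀) : Fin n → ℝ) w := by
    refine eigen_const G hconn hreg (⇑(hA.eigenvectorBasis i₀)) ?_
    rw [hA.mulVec_eigenvectorBasis i₀, hi₀]
  have hx0 : ⇑(hA.eigenvectorBasis i₀) ⬝ᵥ x = 0 := by
    let u₀ : Fin n := ⟨0, by omega⟩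
    calc ⇑(hA.eigenvectorBasis i₀) ⬝ᵥ x
        = ∑ j, (⇑(hA.eigenvectorBasis i₀) : Fin n → ℝ) u₀ * x j :=
          Finset.sum_congr rfl fun j _ => by rw [hconst j u₀]
      _ = (⇑(hA.eigenvectorBasis i₀) : Fin n → ℝ) u₀ * ∑ j, x j := by rw [Finset.mul_sum]
      _ = 0 := by rw [hsumx, mul_zero]
  -- Rayleigh bound
  have hray : x ⬝ᵥ (G.adjMatrix ℝ *ᵥ x) ≤ lam2 * ∑ u, (x u)^2 := by
    have h := rayleigh hA i₀ lam2 hlam x hx0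
    have hxx : x ⬝ᵥ x = ∑ u, (x u)^2 :=
      Finset.sum_congr rfl fun u _ => (sq (x u)).symm
    rwa [hxx] at h
  -- the cross sum
  set Ec : ℝ := ((Finset.univ.filter
      (fun p : Fin n × Fin n => G.Adj p.1 p.2 ∧ p.1 ∈ F ∧ p.2 ∉ F)).card : ℝ) with hEdef
  have hEc' : ((Finset.univ.filter
      (fun p : Fin n × Fin n => G.Adj p.1 p.2 ∧ p.2 ∈ F ∧ p.1 ∉ F)).card : ℝ) = Ec := by
    rw [hEdef]
    norm_cast
    refine Finset.card_nbij' Prod.swap Prod.swap ?_ ?_ ?_ ?_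
    · intro p hp; simp only [Finset.mem_coe, Finset.mem_filter, Finset.mem_univ, true_and] at hp ⊢
      exact ⟨hp.1.symm, hp.2⟩
    · intro p hp; simp only [Finset.mem_coe, Finset.mem_filter, Finset.mem_univ, true_and] at hp ⊢
      exact ⟨hp.1.symm, hp.2⟩
    · intro p _; rfl
    · intro p _; rfl
  have hcross : ∑ p ∈ univ.filter (fun p : Fin n × Fin n => G.Adj p.1 p.2), (x p.1 - x p.2)^2
      = 2 * Ec * (n:ℝ)^2 := by
    have hterm : ∀ u v : Fin n, (x u - x v)^2
        = (if u ∈ F ∧ v ∉ F then ((n:ℝ))^2 else 0)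
          + (if v ∈ F ∧ u ∉ F then ((n:ℝ))^2 else 0) := by
      intro u v
      by_cases hu : u ∈ F <;> by_cases hv : v ∈ F <;>
        simp only [hxdef, hu, hv, not_true, not_false_iff, true_and,
          false_and, and_true, and_false, if_true, if_false] <;>
        nlinarith [hab]
    rw [Finset.sum_congr rfl (fun p _ => hterm p.1 p.2), Finset.sum_add_distrib]
    rw [← Finset.sum_filter, ← Finset.sum_filter]
    rw [Finset.sum_const, Finset.sum_const, Finset.filter_filter, Finset.filter_filter]
    rw [nsmul_eq_mul, nsmul_eq_mul]
    have e1 : ((univ.filter fun p : Fin n × Fin n =>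
        G.Adj p.1 p.2 ∧ p.1 ∈ F ∧ p.2 ∉ F).card : ℝ) = Ec := by rw [hEdef]
    have e2 : ((univ.filter fun p : Fin n × Fin n =>
        G.Adj p.1 p.2 ∧ p.2 ∈ F ∧ p.1 ∉ F).card : ℝ) = Ec := hEc'
    rw [e1, e2]; ring
  -- the key inequality
  have hn' : (0:ℝ) < n := by positivity
  have key : (((d:ℝ) - lam2) * (a*b)) * (n:ℝ) ≤ (Ec * (n:ℝ)) * (n:ℝ) := by
    have hq := quad_identity G hreg x
    rw [hcross, hS2, hab] at hq
    have hray' := hray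
    rw [hS2, hab] at hray'
    nlinarith [hray', hq]
  have key2 : ((d:ℝ) - lam2) * (a*b) ≤ Ec * (a + b) := by
    rw [hab]
    exact le_of_mul_le_mul_right key hn'
  -- finish
  have hEnn : (0:ℝ) ≤ Ec := by rw [hEdef]; positivity
  have hm : (0:ℝ) < min a b := lt_min (by linarith) (by linarith)
  have hminab : min a b * (a + b) ≤ 2 * (a * b) := by
    rcases min_cases a b with ⟨h1, h2⟩ | ⟨h1, h2⟩ <;> rw [h1] <;> nlinarith
  rw [div_le_div_iff₀ (by norm_num : (0:ℝ) < 2) hm]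
  have hab' : (0:ℝ) < a * b := by nlinarith
  have s1 : (((d:ℝ) - lam2) * (a*b)) * (min a b) ≤ (Ec * (a+b)) * (min a b) :=
    mul_le_mul_of_nonneg_right key2 hm.le
  have s2 : Ec * (min a b * (a + b)) ≤ Ec * (2 * (a * b)) :=
    mul_le_mul_of_nonneg_left hminab hEnn
  have s3 : (((d:ℝ) - lam2) * min a b) * (a*b) ≤ (Ec * 2) * (a*b) := by nlinarith
  exact le_of_mul_le_mul_right s3 hab'
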